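/- Let c₁ > c₂ > 0 and 0 < δ < 1/2. There is a constant C such that for all t ≥ 0 and r ≥ c₁t/2 ≥ 1: ∫_t^∞ ⟨(c₁+1)τ + r − c₁t⟩^{−1} ⟨(c₁−c₂)τ + r − c₁t⟩^{−3/2} dτ ≤ C ⟨t+r⟩^{−1}. -/
import Mathlib

noncomputable section

/-- Japanese bracket `⟨s⟩ = (1+s²)^{1/2}`. -/
def jpn (s : ℝ) : ℝ := Real.sqrt (1 + s ^ 2)

open MeasureTheory Set

lemma jpn_pos (s : ℝ) : 0 < jpn s := Real.sqrt_pos.mpr (by positivity)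

lemma jpn_le_jpn {a b : ℝ} (ha : 0 ≤ a) (hab : a ≤ b) : jpn a ≤ jpn b :=
  Real.sqrt_le_sqrt (by nlinarith)

lemma jpn_cont : Continuous jpn :=
  Real.continuous_sqrt.comp (by continuity)

lemma gInt : Integrable (fun x : ℝ => jpn x ^ (-(3:ℝ)/2)) := by
  have h := integrable_rpow_neg_one_add_norm_sq (E := ℝ) (μ := volume) (r := 3/2)
    (by simp only [Module.finrank_self, Nat.cast_one]; norm_num)
  have : (fun x : ℝ => jpn x ^ (-(3:ℝ)/2)) = fun x : ℝ => ((1:ℝ) + ‖x‖ ^ 2) ^ (-(3/2 : ℝ)/2) := by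
    funext x
    rw [jpn, Real.sqrt_eq_rpow, ← Real.rpow_mul (by positivity), Real.norm_eq_abs, sq_abs]
    norm_num
  rw [this]
  exact h

/-- Integral estimate controlling the slower-speed forcing along outgoing
speed-`c₁` characteristics: for `r ≥ c₁t/2 ≥ 1`,
`∫_t^∞ ⟨(c₁+1)τ + r - c₁t⟩^{-1} ⟨(c₁-c₂)τ + r - c₁t⟩^{-3/2} dτ ≤ C⟨t+r⟩^{-1}`. -/
theorem forcing_integral_estimate
    (c1 c2 δ : ℝ) (hc2 : 0 < c2) (hc12 : c2 < c1) (hδ0 : 0 < δ) (hδ : δ < 1 / 2) :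
    ∃ C : ℝ, 0 < C ∧
      ∀ t r : ℝ, 0 ≤ t → c1 * t / 2 ≤ r → 1 ≤ c1 * t / 2 →
        (∫ τ in Set.Ici t,
            jpn ((c1 + 1) * τ + r - c1 * t) ^ (-(1 : ℝ))
              * jpn ((c1 - c2) * τ + r - c1 * t) ^ (-(3 : ℝ) / 2))
          ≤ C * jpn (t + r) ^ (-(1 : ℝ)) := by
  have hc1 : 0 < c1 := hc2.trans hc12
  have hA : 0 < c1 - c2 := sub_pos.mpr hc12
  set g : ℝ → ℝ := fun x => jpn x ^ (-(3:ℝ)/2) with hgdef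
  have hgint : Integrable g := gInt
  have hgnn : ∀ x, 0 ≤ g x := fun x => Real.rpow_nonneg (Real.sqrt_nonneg _) _
  set K := ∫ x, g x with hK
  have hK0 : 0 ≤ K := integral_nonneg hgnn
  refine ⟨(c1 - c2)⁻¹ * K + 1, by positivity, fun t r ht hr h1 => ?_⟩
  have hr1 : (1:ℝ) ≤ r := h1.trans hr
  have htr : 0 < t + r := by linarith
  set B := r - c1 * t with hB
  set f : ℝ → ℝ := fun τ =>
    jpn ((c1 + 1) * τ + r - c1 * t) ^ (-(1 : ℝ))
      * jpn ((c1 - c2) * τ + r - c1 * t) ^ (-(3 : ℝ) / 2) with hf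
  set h : ℝ → ℝ := fun τ => jpn (t + r) ^ (-(1:ℝ)) * g ((c1 - c2) * τ + B) with hh
  have hGint : Integrable (fun τ => g ((c1 - c2) * τ + B)) := by
    have := (hgint.comp_add_right B).comp_mul_left' (R := c1 - c2) hA.ne'
    simpa using this
  have hhint : IntegrableOn h (Ici t) := (hGint.const_mul _).integrableOn
  have hfnn : ∀ τ, 0 ≤ f τ :=
    fun τ => mul_nonneg (Real.rpow_nonneg (Real.sqrt_nonneg _) _)
      (Real.rpow_nonneg (Real.sqrt_nonneg _) _)
  have hbound : ∀ τ ∈ Ici t, f τ ≤ h τ := by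
    intro τ hτ
    have hτt : t ≤ τ := hτ
    have harg : t + r ≤ (c1 + 1) * τ + r - c1 * t := by nlinarith
    have h1le : jpn ((c1 + 1) * τ + r - c1 * t) ^ (-(1:ℝ)) ≤ jpn (t + r) ^ (-(1:ℝ)) :=
      Real.rpow_le_rpow_of_nonpos (jpn_pos _) (jpn_le_jpn htr.le harg) (by norm_num)
    have heq : (c1 - c2) * τ + r - c1 * t = (c1 - c2) * τ + B := by rw [hB]; ring
    calc f τ ≤ jpn (t + r) ^ (-(1:ℝ)) * jpn ((c1 - c2) * τ + r - c1 * t) ^ (-(3:ℝ)/2) :=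
          mul_le_mul_of_nonneg_right h1le (Real.rpow_nonneg (Real.sqrt_nonneg _) _)
      _ = h τ := by rw [hh, hgdef]; simp only [heq]
  have hfcont : Continuous f := by
    apply Continuous.mul
    · exact (jpn_cont.comp (by continuity)).rpow_const fun x => Or.inl (jpn_pos _).ne'
    · exact (jpn_cont.comp (by continuity)).rpow_const fun x => Or.inl (jpn_pos _).ne'
  have hfint : IntegrableOn f (Ici t) := by
    refine Integrable.mono' hhint hfcont.aestronglyMeasurable ?_
    refine (ae_restrict_iff' measurableSet_Ici).mpr (ae_of_all _ fun τ hτ => ?_)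
    rw [Real.norm_eq_abs, abs_of_nonneg (hfnn τ)]
    exact hbound τ hτ
  have step1 : (∫ τ in Ici t, f τ) ≤ ∫ τ in Ici t, h τ :=
    setIntegral_mono_on hfint hhint measurableSet_Ici hbound
  have step2 : (∫ τ in Ici t, h τ)
      = jpn (t + r) ^ (-(1:ℝ)) * ∫ τ in Ici t, g ((c1 - c2) * τ + B) := by
    rw [hh]; exact MeasureTheory.integral_const_mul _ _
  have step3 : (∫ τ in Ici t, g ((c1 - c2) * τ + B)) ≤ (c1 - c2)⁻¹ * K := by
    have hle : (∫ τ in Ici t, g ((c1 - c2) * τ + B)) ≤ ∫ τ, g ((c1 - c2) * τ + B) :=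
      setIntegral_le_integral hGint (ae_of_all _ fun x => hgnn _)
    have heq2 : (∫ τ, g ((c1 - c2) * τ + B)) = (c1 - c2)⁻¹ * K := by
      have h1 : (∫ τ, (fun y => g (y + B)) ((c1 - c2) * τ))
          = |(c1 - c2)⁻¹| • ∫ y, g (y + B) :=
        Measure.integral_comp_mul_left (fun y => g (y + B)) (c1 - c2)
      have h2 : (∫ y, g (y + B)) = K := by
        rw [hK]; exact integral_add_right_eq_self g B
      simp only [h2, smul_eq_mul, abs_of_pos (inv_pos.mpr hA)] at h1
      exact h1
    exact hle.trans_eq heq2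
  have hjnn : 0 ≤ jpn (t + r) ^ (-(1:ℝ)) := Real.rpow_nonneg (Real.sqrt_nonneg _) _
  calc (∫ τ in Ici t, f τ) ≤ ∫ τ in Ici t, h τ := step1
    _ = jpn (t + r) ^ (-(1:ℝ)) * ∫ τ in Ici t, g ((c1 - c2) * τ + B) := step2
    _ ≤ jpn (t + r) ^ (-(1:ℝ)) * ((c1 - c2)⁻¹ * K) := by
        exact mul_le_mul_of_nonneg_left step3 hjnn
    _ ≤ ((c1 - c2)⁻¹ * K + 1) * jpn (t + r) ^ (-(1:ℝ)) := by nlinarith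
end
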